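/- For a uniformly random σ : Fin (2n) → {-1,1} conditioned on ∑ σ(i) ∈ {-2,2}, given that the partial sum of the first j-1 entries equals r, the conditional probability that σ(j) = +1 equals [C(2n-j, (2n-j-r+1)/2) + C(2n-j, (2n-j-r-3)/2)] / [C(2n-j+1, (2n-j-r+3)/2) + C(2n-j+1, (2n-j-r-1)/2)]. -/

import Mathlib

/-- `halfChoose a t` is the binomial coefficient `C(a, t/2)`, interpreted as `0`
when `t/2` is not an integer in `[0, a]` (note `Nat.choose` already vanishes
above `a`). -/
def halfChoose (a : ℕ) (t : ℤ) : ℕ :=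
  if 0 ≤ t ∧ t % 2 = 0 then a.choose (t / 2).toNat else 0

open Finset

lemma sum_pm {k : ℕ} (σ : Fin k → Bool) :
    ∑ i, (if σ i then (1:ℤ) else -1)
      = 2 * ((Finset.univ.filter (fun i => σ i = true)).card : ℤ) - k := by
  have h : ∀ b : Bool, (if b then (1:ℤ) else -1) = 2*(if b = true then (1:ℤ) else 0) - 1 := by
    decide
  simp_rw [h]
  rw [Finset.sum_sub_distrib, ← Finset.mul_sum, Finset.sum_boole]
  simp [Finset.card_univ]

lemma card_sum_eq (k : ℕ) (s : ℤ) :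
    (Finset.univ.filter (fun σ : Fin k → Bool => (∑ i, (if σ i then (1:ℤ) else -1)) = s)).card
      = halfChoose k ((k : ℤ) + s) := by
  by_cases h : 0 ≤ (k:ℤ) + s ∧ ((k:ℤ) + s) % 2 = 0
  · set t : ℕ := (((k:ℤ) + s)/2).toNat with ht'
    have ht : (k:ℤ) + s = 2 * t := by omega
    rw [halfChoose, if_pos h]
    have h2 : ((((k:ℤ) + s)) / 2).toNat = t := rfl
    rw [h2]
    rw [show k.choose t = (powersetCard t (univ : Finset (Fin k))).card by
      simp [Finset.card_powersetCard]]
    refine Finset.card_bij' (fun σ _ => Finset.univ.filter (fun i => σ i = true))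
      (fun T _ => fun i => decide (i ∈ T)) ?_ ?_ ?_ ?_
    · intro σ hσ
      simp only [Finset.mem_filter, Finset.mem_univ, true_and] at hσ
      rw [sum_pm] at hσ
      simp only [Finset.mem_powersetCard]
      exact ⟨Finset.subset_univ _, by omega⟩
    · intro T hT
      simp only [Finset.mem_powersetCard] at hT
      simp only [Finset.mem_filter, Finset.mem_univ, true_and]
      rw [sum_pm]
      have h3 : Finset.univ.filter (fun i => decide (i ∈ T) = true) = T := by
        ext i; simp
      rw [h3, hT.2]
      omega
    · intro σ hσ
      funext i
      by_cases hi : σ i <;> simp [hi]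
    · intro T hT
      ext i; simp
  · rw [halfChoose, if_neg h]
    rw [Finset.card_eq_zero, Finset.filter_eq_empty_iff]
    intro σ _
    rw [sum_pm]
    intro hc
    omega

lemma card_sum_fst (k : ℕ) (s : ℤ) :
    (Finset.univ.filter (fun σ : Fin (k+1) → Bool =>
        (∑ i, (if σ i then (1:ℤ) else -1)) = s ∧ σ 0 = true)).card
      = (Finset.univ.filter (fun τ : Fin k → Bool =>
          (∑ i, (if τ i then (1:ℤ) else -1)) = s - 1)).card := by
  refine Finset.card_bij' (fun σ _ => Fin.tail σ) (fun τ _ => Fin.cons true τ) ?_ ?_ ?_ ?_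
  · intro σ hσ
    simp only [Finset.mem_filter, Finset.mem_univ, true_and] at hσ ⊢
    have hsum := Fin.sum_univ_succ (fun i => if σ i then (1:ℤ) else -1)
    rw [hσ.2] at hsum
    simp only [if_true] at hsum
    have : (∑ i : Fin k, if σ i.succ then (1:ℤ) else -1) = s - 1 := by
      rw [hσ.1] at hsum; linarith
    convert this using 4 <;> rfl
  · intro τ hτ
    simp only [Finset.mem_filter, Finset.mem_univ, true_and] at hτ ⊢
    refine ⟨?_, by simp⟩
    rw [Fin.sum_univ_succ]
    simp only [Fin.cons_zero, Fin.cons_succ, if_true]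
    rw [hτ]; ring
  · intro σ hσ
    simp only [Finset.mem_filter, Finset.mem_univ, true_and] at hσ
    have h4 := Fin.cons_self_tail σ
    rw [hσ.2] at h4
    simpa using h4
  · intro τ hτ
    simp [Fin.tail_cons]

lemma card_filter_equiv {α β : Type*} [Fintype α] [Fintype β] [DecidableEq α] [DecidableEq β]
    (e : β ≃ α) (P : α → Prop) [DecidablePred P] :
    (Finset.univ.filter P).card = (Finset.univ.filter (fun b => P (e b))).card := by
  refine Finset.card_bij' (fun a _ => e.symm a) (fun b _ => e b) ?_ ?_ ?_ ?_ <;> simp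

/-- For a uniformly random `σ : Fin (2n) → {-1,1}` conditioned on
`∑ σ(i) ∈ {-2,2}`, given that the partial sum of the first `j-1` entries equals
`r`, the conditional probability that `σ(j) = +1` equals
`[C(2n-j, (2n-j-r+1)/2) + C(2n-j, (2n-j-r-3)/2)] /
 [C(2n-j+1, (2n-j-r+3)/2) + C(2n-j+1, (2n-j-r-1)/2)]`.
Assignments are modeled as `σ : Fin (2n) → Bool`, `true ↦ +1`, `false ↦ -1`;
crease labels run over `1, …, 2n`, so crease `j` is the index `j - 1` in
`Fin (2n)`. Conditional probability is expressed as a ratio of counts under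
the uniform measure on the conditioning event. -/
theorem stmt_2 (n j : ℕ) (hj1 : 1 ≤ j) (hj2 : j ≤ 2 * n) (r : ℤ)
    (E : Finset (Fin (2 * n) → Bool))
    (hE : E = Finset.univ.filter
        (fun σ : Fin (2 * n) → Bool =>
          ((∑ i, (if σ i then (1 : ℤ) else -1)) = 2 ∨
            (∑ i, (if σ i then (1 : ℤ) else -1)) = -2) ∧
          (∑ i ∈ Finset.univ.filter (fun i : Fin (2 * n) => (i : ℕ) < j - 1),
              (if σ i then (1 : ℤ) else -1)) = r))
    (hpos : E.card ≠ 0) :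
    ((E.filter (fun σ => σ ⟨j - 1, by omega⟩ = true)).card : ℚ) / E.card
      = ((halfChoose (2 * n - j) ((2 * n : ℤ) - j - r + 1)
            + halfChoose (2 * n - j) ((2 * n : ℤ) - j - r - 3) : ℕ) : ℚ)
        / ((halfChoose (2 * n - j + 1) ((2 * n : ℤ) - j - r + 3)
            + halfChoose (2 * n - j + 1) ((2 * n : ℤ) - j - r - 1) : ℕ) : ℚ) := by
  have hmk : (j - 1) + (2 * n - j + 1) = 2 * n := by omega
  set m := j - 1 with hm
  set K := 2 * n - j + 1 with hK
  have hK0 : 0 < K := by omega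
  set E₁ : Fin m ⊕ Fin K ≃ Fin (2*n) := finSumFinEquiv.trans (finCongr hmk) with hE₁
  set e : (Fin m → Bool) × (Fin K → Bool) ≃ (Fin (2*n) → Bool) :=
    (Equiv.sumArrowEquivProdArrow (Fin m) (Fin K) Bool).symm.trans
      (Equiv.arrowCongr E₁ (Equiv.refl Bool)) with he'
  have he : ∀ (a : Fin m → Bool) (b : Fin K → Bool) (x : Fin m ⊕ Fin K),
      e (a, b) (E₁ x) = Sum.elim a b x := by
    intro a b x
    simp [he', Equiv.sumArrowEquivProdArrow]
  have hvl : ∀ i : Fin m, ((E₁ (Sum.inl i)) : ℕ) = i := by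
    intro i; simp [hE₁]
  have hvr : ∀ i : Fin K, ((E₁ (Sum.inr i)) : ℕ) = m + i := by
    intro i; simp [hE₁]
  have hsum : ∀ (a : Fin m → Bool) (b : Fin K → Bool),
      (∑ i, if e (a,b) i then (1:ℤ) else -1)
        = (∑ i, if a i then (1:ℤ) else -1) + (∑ i, if b i then (1:ℤ) else -1) := by
    intro a b
    rw [← Equiv.sum_comp E₁ (fun i => if e (a,b) i then (1:ℤ) else -1)]
    rw [Fintype.sum_sum_type]
    simp only [he]
    rfl
  have hpre : ∀ (a : Fin m → Bool) (b : Fin K → Bool),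
      (∑ i ∈ Finset.univ.filter (fun i : Fin (2*n) => (i:ℕ) < j - 1),
        if e (a,b) i then (1:ℤ) else -1) = ∑ i, if a i then (1:ℤ) else -1 := by
    intro a b
    rw [Finset.sum_filter]
    rw [← Equiv.sum_comp E₁
      (fun i : Fin (2*n) => if (i:ℕ) < j - 1 then (if e (a,b) i then (1:ℤ) else -1) else 0)]
    rw [Fintype.sum_sum_type]
    simp only [he]
    have h1 : ∀ i : Fin m,
        (if ((E₁ (Sum.inl i)):ℕ) < j - 1 then (if Sum.elim a b (Sum.inl i) then (1:ℤ) else -1) else 0)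
          = if a i then (1:ℤ) else -1 := by
      intro i
      rw [if_pos (by rw [hvl]; omega)]
      rfl
    have h2 : ∀ i : Fin K,
        (if ((E₁ (Sum.inr i)):ℕ) < j - 1 then (if Sum.elim a b (Sum.inr i) then (1:ℤ) else -1) else 0)
          = 0 := by
      intro i
      rw [if_neg (by rw [hvr]; omega)]
    rw [Finset.sum_congr rfl (fun i _ => h1 i), Finset.sum_congr rfl (fun i _ => h2 i)]
    simp
  have hpt : ∀ (hh : m < 2*n) (a : Fin m → Bool) (b : Fin K → Bool),
      e (a, b) ⟨m, hh⟩ = b ⟨0, hK0⟩ := by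
    intro hh a b
    have hidx : (⟨m, hh⟩ : Fin (2*n)) = E₁ (Sum.inr ⟨0, hK0⟩) := by
      apply Fin.ext
      rw [hvr]
      simp
    rw [hidx, he]
    rfl
  obtain ⟨P, hP⟩ : ∃ P : ℕ, P = (Finset.univ.filter (fun a : Fin m → Bool =>
      (∑ i, if a i then (1:ℤ) else -1) = r)).card := ⟨_, rfl⟩
  obtain ⟨B, hB⟩ : ∃ B : ℕ,
      B = halfChoose K ((K:ℤ) + (2 - r)) + halfChoose K ((K:ℤ) + (-2 - r)) := ⟨_, rfl⟩
  have hEcard : E.card = P * B := by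
    rw [hE, card_filter_equiv e]
    have hiff : ∀ x : (Fin m → Bool) × (Fin K → Bool),
        (((∑ i, if e x i then (1:ℤ) else -1) = 2 ∨
          (∑ i, if e x i then (1:ℤ) else -1) = -2) ∧
          (∑ i ∈ Finset.univ.filter (fun i : Fin (2*n) => (i:ℕ) < j - 1),
            if e x i then (1:ℤ) else -1) = r)
        ↔ ((∑ i, if x.1 i then (1:ℤ) else -1) = r ∧
            ((∑ i, if x.2 i then (1:ℤ) else -1) = 2 - r ∨
             (∑ i, if x.2 i then (1:ℤ) else -1) = -2 - r)) := by
      rintro ⟨a, b⟩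
      dsimp only
      rw [hsum a b, hpre a b]
      constructor
      · rintro ⟨h1 | h1, h2⟩ <;> exact ⟨h2, by clear * - h1 h2; omega⟩
      · rintro ⟨h1, h2 | h2⟩
        · exact ⟨Or.inl (by clear * - h1 h2; omega), h1⟩
        · exact ⟨Or.inr (by clear * - h1 h2; omega), h1⟩
    rw [Finset.filter_congr (fun x _ => hiff x)]
    rw [← Finset.univ_product_univ,
      Finset.filter_product (fun a : Fin m → Bool => (∑ i, if a i then (1:ℤ) else -1) = r)
        (fun b : Fin K → Bool => (∑ i, if b i then (1:ℤ) else -1) = 2 - r ∨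
          (∑ i, if b i then (1:ℤ) else -1) = -2 - r),
      Finset.card_product]
    congr 1
    · exact hP.symm
    rw [Finset.filter_or, Finset.card_union_of_disjoint
      (Finset.disjoint_left.2 (fun b hb1 hb2 => by
        simp only [Finset.mem_filter] at hb1 hb2; clear * - hb1 hb2; omega))]
    rw [card_sum_eq, card_sum_eq, hB]
  obtain ⟨A, hA⟩ : ∃ A : ℕ,
      A = halfChoose (2*n-j) (((2*n-j : ℕ):ℤ) + (1 - r))
        + halfChoose (2*n-j) (((2*n-j : ℕ):ℤ) + (-3 - r)) := ⟨_, rfl⟩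
  have hNcard : ∀ (hh : m < 2 * n),
      (E.filter (fun σ => σ ⟨m, hh⟩ = true)).card = P * A := by
    intro hh
    rw [hE, Finset.filter_filter, card_filter_equiv e]
    have hiff : ∀ x : (Fin m → Bool) × (Fin K → Bool),
        ((((∑ i, if e x i then (1:ℤ) else -1) = 2 ∨
          (∑ i, if e x i then (1:ℤ) else -1) = -2) ∧
          (∑ i ∈ Finset.univ.filter (fun i : Fin (2*n) => (i:ℕ) < j - 1),
            if e x i then (1:ℤ) else -1) = r) ∧ e x ⟨m, hh⟩ = true)
        ↔ ((∑ i, if x.1 i then (1:ℤ) else -1) = r ∧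
            (((∑ i, if x.2 i then (1:ℤ) else -1) = 2 - r ∧ x.2 ⟨0, hK0⟩ = true) ∨
             ((∑ i, if x.2 i then (1:ℤ) else -1) = -2 - r ∧ x.2 ⟨0, hK0⟩ = true))) := by
      rintro ⟨a, b⟩
      dsimp only
      rw [hsum a b, hpre a b, hpt hh a b]
      constructor
      · rintro ⟨⟨h1 | h1, h2⟩, h3⟩
        · exact ⟨h2, Or.inl ⟨by clear * - h1 h2; omega, h3⟩⟩
        · exact ⟨h2, Or.inr ⟨by clear * - h1 h2; omega, h3⟩⟩
      · rintro ⟨h1, ⟨h2, h3⟩ | ⟨h2, h3⟩⟩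
        · exact ⟨⟨Or.inl (by clear * - h1 h2; omega), h1⟩, h3⟩
        · exact ⟨⟨Or.inr (by clear * - h1 h2; omega), h1⟩, h3⟩
    rw [Finset.filter_congr (fun x _ => hiff x)]
    rw [← Finset.univ_product_univ,
      Finset.filter_product (fun a : Fin m → Bool => (∑ i, if a i then (1:ℤ) else -1) = r)
        (fun b : Fin K → Bool =>
          ((∑ i, if b i then (1:ℤ) else -1) = 2 - r ∧ b ⟨0, hK0⟩ = true) ∨
          ((∑ i, if b i then (1:ℤ) else -1) = -2 - r ∧ b ⟨0, hK0⟩ = true)),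
      Finset.card_product]
    congr 1
    · exact hP.symm
    rw [Finset.filter_or, Finset.card_union_of_disjoint
      (Finset.disjoint_left.2 (fun b hb1 hb2 => by
        simp only [Finset.mem_filter] at hb1 hb2; clear * - hb1 hb2; omega))]
    have hz : (⟨0, hK0⟩ : Fin K) = (0 : Fin ((2*n-j) + 1)) := rfl
    rw [hz]
    rw [show (Finset.univ.filter (fun b : Fin K → Bool =>
        (∑ i, if b i then (1:ℤ) else -1) = 2 - r ∧ b 0 = true)).card
      = (Finset.univ.filter (fun b : Fin ((2*n-j)+1) → Bool =>
        (∑ i, if b i then (1:ℤ) else -1) = 2 - r ∧ b 0 = true)).card from rfl]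
    rw [show (Finset.univ.filter (fun b : Fin K → Bool =>
        (∑ i, if b i then (1:ℤ) else -1) = -2 - r ∧ b 0 = true)).card
      = (Finset.univ.filter (fun b : Fin ((2*n-j)+1) → Bool =>
        (∑ i, if b i then (1:ℤ) else -1) = -2 - r ∧ b 0 = true)).card from rfl]
    rw [card_sum_fst, card_sum_fst, card_sum_eq, card_sum_eq, hA]
    congr 2 <;> push_cast <;> ring
  have hlt : m < 2 * n := by clear * - hj1 hj2; omega
  have hPne : P ≠ 0 := by
    intro h; rw [hEcard, h, Nat.zero_mul] at hpos; exact hpos rfl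
  have hBne : B ≠ 0 := by
    intro h; rw [hEcard, h, Nat.mul_zero] at hpos; exact hpos rfl
  rw [hNcard hlt, hEcard]
  have hcast : ((2*n - j : ℕ) : ℤ) = 2*n - j := by clear * - hj1 hj2; omega
  have hcast2 : ((K : ℕ) : ℤ) = 2*n - j + 1 := by clear * - hj1 hj2 hK; omega
  have harg1 : ((2*n-j : ℕ):ℤ) + (1 - r) = (2 * n : ℤ) - j - r + 1 := by
    clear * - hcast; omega
  have harg2 : ((2*n-j : ℕ):ℤ) + (-3 - r) = (2 * n : ℤ) - j - r - 3 := by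
    clear * - hcast; omega
  have harg3 : ((K:ℤ)) + (2 - r) = (2 * n : ℤ) - j - r + 3 := by
    clear * - hcast2; omega
  have harg4 : ((K:ℤ)) + (-2 - r) = (2 * n : ℤ) - j - r - 1 := by
    clear * - hcast2; omega
  rw [hA, hB, harg1, harg2, harg3, harg4]
  push_cast
  rw [mul_div_mul_left]
  exact_mod_cast hPne
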